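/- Let c : (0,∞)² → ℂ be smooth and suppose that [ (D_1 − d)² − (D_2 + εL)² − (η_1/a_1)² ] c = 0 identically on (0,∞)², where D_1 := ∂_1 + c_1 − εu and D_2 := ∂_2 + c_2 + εu. Then the function f : (0,∞) × J → ℂ defined by f(Φ(a_1,a_2)) := a_1^{c_1−d} a_2^{c_2+εL} exp(−ε u(a_1,a_2)) c(a_1,a_2) is smooth and satisfies (∂_{t_1}² − ∂_{t_2}² − t_1²) f = 0 identically on (0,∞) × J. -/

import Mathlib

/-- The Euler operator `∂₁ = a₁ ∂/∂a₁` in the first variable. -/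
noncomputable def euler1 (g : ℝ → ℝ → ℂ) : ℝ → ℝ → ℂ :=
  fun x y => (x : ℂ) * deriv (fun x' => g x' y) x

/-- The Euler operator `∂₂ = a₂ ∂/∂a₂` in the second variable. -/
noncomputable def euler2 (g : ℝ → ℝ → ℂ) : ℝ → ℝ → ℂ :=
  fun x y => (y : ℂ) * deriv (fun y' => g x y') y

/-- `D₁ := ∂₁ + c₁ − εu`, where `u(a₁,a₂) = η₂a₁/(2a₂)`. -/
noncomputable def D1op (η₂ ε c₁ : ℝ) (g : ℝ → ℝ → ℂ) : ℝ → ℝ → ℂ :=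
  fun a₁ a₂ => euler1 g a₁ a₂ + ((c₁ - ε * (η₂ * a₁ / (2 * a₂)) : ℝ) : ℂ) * g a₁ a₂

/-- `D₂ := ∂₂ + c₂ + εu`, where `u(a₁,a₂) = η₂a₁/(2a₂)`. -/
noncomputable def D2op (η₂ ε c₂ : ℝ) (g : ℝ → ℝ → ℂ) : ℝ → ℝ → ℂ :=
  fun a₁ a₂ => euler2 g a₁ a₂ + ((c₂ + ε * (η₂ * a₁ / (2 * a₂)) : ℝ) : ℂ) * g a₁ a₂

/-- `T + r` : add the constant-multiplication operator `r` to the operator `T`. -/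
noncomputable def addConst (T : (ℝ → ℝ → ℂ) → (ℝ → ℝ → ℂ)) (r : ℝ)
    (g : ℝ → ℝ → ℂ) : ℝ → ℝ → ℂ :=
  fun x y => T g x y + (r : ℂ) * g x y


open Set Function Real Filter

noncomputable def Wge (α β η₂ ε : ℝ) (h : ℝ → ℝ → ℂ) : ℝ → ℝ → ℂ :=
  fun a b => ((a ^ α * b ^ β * Real.exp (-ε * (η₂ * a / (2 * b))) : ℝ) : ℂ) * h a b

lemma key1 (η₂ ε c₁ d β : ℝ) {x y : ℝ} (hx : 0 < x) (hy : 0 < y)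
    {h : ℝ → ℝ → ℂ} {h' : ℂ} (hh : HasDerivAt (fun x' => h x' y) h' x) :
    euler1 (Wge (c₁ - d) β η₂ ε h) x y
      = ((x ^ (c₁ - d) * y ^ β * Real.exp (-ε * (η₂ * x / (2 * y))) : ℝ) : ℂ)
        * addConst (D1op η₂ ε c₁) (-d) h x y := by
  have hexp : HasDerivAt (fun x' : ℝ => Real.exp (-ε * (η₂ * x' / (2 * y))))
      (Real.exp (-ε * (η₂ * x / (2 * y))) * (-ε * η₂ / (2 * y))) x := by
    have h0 : HasDerivAt (fun x' : ℝ => -ε * (η₂ * x' / (2 * y))) (-ε * η₂ / (2 * y)) x := by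
      have h1 := (hasDerivAt_id x).const_mul (-ε * η₂ / (2 * y))
      have heq : (fun x' : ℝ => -ε * (η₂ * x' / (2 * y)))
          = fun x' : ℝ => -ε * η₂ / (2 * y) * id x' := by funext x'; simp [id]; ring
      rw [heq]
      simpa using h1
    exact h0.exp
  have hrp : HasDerivAt (fun x' : ℝ => x' ^ (c₁ - d)) ((c₁ - d) * (x ^ (c₁ - d) / x)) x := by
    have h1 := Real.hasDerivAt_rpow_const (x := x) (p := c₁ - d) (Or.inl hx.ne')
    rwa [Real.rpow_sub_one hx.ne'] at h1
  have hW := (hrp.mul_const (y ^ β)).mul hexp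
  have hWC := Complex.ofRealCLM.hasFDerivAt.comp_hasDerivAt x hW
  simp only [Function.comp_def, Complex.ofRealCLM_apply] at hWC
  have hmul := hWC.mul hh
  have hx' : (x : ℂ) ≠ 0 := by exact_mod_cast hx.ne'
  have hy' : (y : ℂ) ≠ 0 := by exact_mod_cast hy.ne'
  simp only [euler1, Wge, addConst, D1op]
  simp only [Pi.mul_def] at hmul
  rw [hmul.deriv, hh.deriv]
  push_cast
  field_simp
  ring

lemma key2 (η₂ ε c₂ L α : ℝ) {x y : ℝ} (hx : 0 < x) (hy : 0 < y)
    {h : ℝ → ℝ → ℂ} {h' : ℂ} (hh : HasDerivAt (fun y' => h x y') h' y) :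
    euler2 (Wge α (c₂ + ε * L) η₂ ε h) x y
      = ((x ^ α * y ^ (c₂ + ε * L) * Real.exp (-ε * (η₂ * x / (2 * y))) : ℝ) : ℂ)
        * addConst (D2op η₂ ε c₂) (ε * L) h x y := by
  have hexp : HasDerivAt (fun y' : ℝ => Real.exp (-ε * (η₂ * x / (2 * y'))))
      (Real.exp (-ε * (η₂ * x / (2 * y))) * (-ε * η₂ * x / 2 * (-(y ^ 2)⁻¹))) y := by
    have h1 := (hasDerivAt_inv hy.ne').const_mul (-ε * η₂ * x / 2)
    have heq : ∀ y' : ℝ, -ε * (η₂ * x / (2 * y'))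
        = -ε * η₂ * x / 2 * y'⁻¹ := by intro y'; ring
    simp only [heq]
    exact h1.exp
  have hrp : HasDerivAt (fun y' : ℝ => y' ^ (c₂ + ε * L))
      ((c₂ + ε * L) * (y ^ (c₂ + ε * L) / y)) y := by
    have h1 := Real.hasDerivAt_rpow_const (x := y) (p := c₂ + ε * L) (Or.inl hy.ne')
    rwa [Real.rpow_sub_one hy.ne'] at h1
  have hW := (hrp.const_mul (x ^ α)).mul hexp
  have hWC := Complex.ofRealCLM.hasFDerivAt.comp_hasDerivAt y hW
  simp only [Function.comp_def, Complex.ofRealCLM_apply] at hWC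
  have hmul := hWC.mul hh
  have hx' : (x : ℂ) ≠ 0 := by exact_mod_cast hx.ne'
  have hy' : (y : ℂ) ≠ 0 := by exact_mod_cast hy.ne'
  simp only [euler2, Wge, addConst, D2op]
  simp only [Pi.mul_def] at hmul
  rw [hmul.deriv, hh.deriv]
  push_cast
  field_simp
  ring

lemma inv_euler {κ t : ℝ} (ht : t ≠ 0) {h : ℝ → ℂ} {h' : ℂ}
    (hh : HasDerivAt h h' (κ / t)) :
    (t : ℂ) * deriv (fun s => h (κ / s)) t = -(((κ / t : ℝ) : ℂ) * h') := by
  have h1 : HasDerivAt (fun s : ℝ => κ / s) (κ * (-(t ^ 2)⁻¹)) t := by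
    simp only [div_eq_mul_inv]
    exact (hasDerivAt_inv ht).const_mul κ
  have h3 := HasDerivAt.scomp t hh h1
  have h4 : deriv (fun s => h (κ / s)) t = (κ * (-(t ^ 2)⁻¹)) • h' := by
    have := h3.deriv
    simpa [Function.comp_def] using this
  rw [h4, Complex.real_smul]
  push_cast
  have ht' : (t : ℂ) ≠ 0 := by exact_mod_cast ht
  field_simp

/-- derivative of the first slice from 2D differentiability -/
lemma hasDerivAt_slice1 {c : ℝ → ℝ → ℂ} {x y : ℝ}
    (h : DifferentiableAt ℝ (uncurry c) (x, y)) :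
    HasDerivAt (fun x' => c x' y) (fderiv ℝ (uncurry c) (x, y) (1, 0)) x := by
  have h1 : HasDerivAt (fun x' : ℝ => (x', y)) ((1 : ℝ), (0 : ℝ)) x := by
    simpa using HasDerivAt.prodMk (hasDerivAt_id x) (hasDerivAt_const x y)
  exact h.hasFDerivAt.comp_hasDerivAt x h1

lemma hasDerivAt_slice2 {c : ℝ → ℝ → ℂ} {x y : ℝ}
    (h : DifferentiableAt ℝ (uncurry c) (x, y)) :
    HasDerivAt (fun y' => c x y') (fderiv ℝ (uncurry c) (x, y) (0, 1)) y := by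
  have h1 : HasDerivAt (fun y' : ℝ => (x, y')) ((0 : ℝ), (1 : ℝ)) y := by
    simpa using HasDerivAt.prodMk (hasDerivAt_const y x) (hasDerivAt_id y)
  exact h.hasFDerivAt.comp_hasDerivAt y h1

lemma diffAt_of_smooth {c : ℝ → ℝ → ℂ}
    (hc : ContDiffOn ℝ (⊤ : ℕ∞) (uncurry c) (Ioi 0 ×ˢ Ioi 0)) {x y : ℝ}
    (hx : 0 < x) (hy : 0 < y) : DifferentiableAt ℝ (uncurry c) (x, y) :=
  ((hc.contDiffAt (((isOpen_Ioi.prod isOpen_Ioi)).mem_nhds (Set.mk_mem_prod hx hy))).differentiableAt (by simp))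

lemma contDiffOn_pd1 {c : ℝ → ℝ → ℂ}
    (hc : ContDiffOn ℝ (⊤ : ℕ∞) (uncurry c) (Ioi 0 ×ˢ Ioi 0)) :
    ContDiffOn ℝ (⊤ : ℕ∞) (fun p : ℝ × ℝ => deriv (fun x' => c x' p.2) p.1)
      (Ioi 0 ×ˢ Ioi 0) := by
  have hO : IsOpen ((Ioi 0 ×ˢ Ioi 0) : Set (ℝ × ℝ)) := isOpen_Ioi.prod isOpen_Ioi
  have hfd : ContDiffOn ℝ (⊤ : ℕ∞) (fderiv ℝ (uncurry c)) (Ioi 0 ×ˢ Ioi 0) :=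
    hc.fderiv_of_isOpen hO le_rfl
  have h2 : ContDiffOn ℝ (⊤ : ℕ∞) (fun p : ℝ × ℝ => fderiv ℝ (uncurry c) p ((1:ℝ), (0:ℝ)))
      (Ioi 0 ×ˢ Ioi 0) :=
    (ContinuousLinearMap.apply ℝ ℂ ((1:ℝ), (0:ℝ))).contDiff.comp_contDiffOn hfd
  refine h2.congr ?_
  rintro ⟨x, y⟩ hp
  exact (hasDerivAt_slice1 (diffAt_of_smooth hc hp.1 hp.2)).deriv

lemma contDiffOn_pd2 {c : ℝ → ℝ → ℂ}
    (hc : ContDiffOn ℝ (⊤ : ℕ∞) (uncurry c) (Ioi 0 ×ˢ Ioi 0)) :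
    ContDiffOn ℝ (⊤ : ℕ∞) (fun p : ℝ × ℝ => deriv (fun y' => c p.1 y') p.2)
      (Ioi 0 ×ˢ Ioi 0) := by
  have hO : IsOpen ((Ioi 0 ×ˢ Ioi 0) : Set (ℝ × ℝ)) := isOpen_Ioi.prod isOpen_Ioi
  have hfd : ContDiffOn ℝ (⊤ : ℕ∞) (fderiv ℝ (uncurry c)) (Ioi 0 ×ˢ Ioi 0) :=
    hc.fderiv_of_isOpen hO le_rfl
  have h2 : ContDiffOn ℝ (⊤ : ℕ∞) (fun p : ℝ × ℝ => fderiv ℝ (uncurry c) p ((0:ℝ), (1:ℝ)))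
      (Ioi 0 ×ˢ Ioi 0) :=
    (ContinuousLinearMap.apply ℝ ℂ ((0:ℝ), (1:ℝ))).contDiff.comp_contDiffOn hfd
  refine h2.congr ?_
  rintro ⟨x, y⟩ hp
  exact (hasDerivAt_slice2 (diffAt_of_smooth hc hp.1 hp.2)).deriv

lemma contDiffOn_Wreal (α β η₂ ε : ℝ) :
    ContDiffOn ℝ (⊤ : ℕ∞)
      (fun p : ℝ × ℝ => p.1 ^ α * p.2 ^ β * Real.exp (-ε * (η₂ * p.1 / (2 * p.2))))
      ((Ioi 0 ×ˢ Ioi 0) : Set (ℝ × ℝ)) := by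
  have h1 : ContDiffOn ℝ (⊤ : ℕ∞) (fun p : ℝ × ℝ => p.1 ^ α) (Ioi 0 ×ˢ Ioi 0) := by
    intro p hp
    exact ((Real.contDiffAt_rpow_const_of_ne (ne_of_gt hp.1)).comp p
      contDiff_fst.contDiffAt).contDiffWithinAt
  have h2 : ContDiffOn ℝ (⊤ : ℕ∞) (fun p : ℝ × ℝ => p.2 ^ β) (Ioi 0 ×ˢ Ioi 0) := by
    intro p hp
    exact ((Real.contDiffAt_rpow_const_of_ne (ne_of_gt hp.2)).comp p
      contDiff_snd.contDiffAt).contDiffWithinAt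
  have h3 : ContDiffOn ℝ (⊤ : ℕ∞)
      (fun p : ℝ × ℝ => Real.exp (-ε * (η₂ * p.1 / (2 * p.2)))) (Ioi 0 ×ˢ Ioi 0) := by
    apply Real.contDiff_exp.comp_contDiffOn
    apply ContDiffOn.mul contDiffOn_const
    apply ContDiffOn.div
    · exact (contDiff_const.mul contDiff_fst).contDiffOn
    · exact (contDiff_const.mul contDiff_snd).contDiffOn
    · intro p hp
      have : (0:ℝ) < p.2 := hp.2
      positivity
  exact (h1.mul h2).mul h3

lemma contDiffOn_Wge (α β η₂ ε : ℝ) {h : ℝ → ℝ → ℂ}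
    (hh : ContDiffOn ℝ (⊤ : ℕ∞) (uncurry h) (Ioi 0 ×ˢ Ioi 0)) :
    ContDiffOn ℝ (⊤ : ℕ∞) (uncurry (Wge α β η₂ ε h)) (Ioi 0 ×ˢ Ioi 0) := by
  have hco : ContDiff ℝ (⊤ : ℕ∞) (fun r : ℝ => (r : ℂ)) := Complex.ofRealCLM.contDiff
  exact ((hco.comp_contDiffOn (contDiffOn_Wreal α β η₂ ε))).mul hh

lemma contDiffOn_coef1 (η₂ ε c₁ : ℝ) :
    ContDiffOn ℝ (⊤ : ℕ∞) (fun p : ℝ × ℝ => ((c₁ - ε * (η₂ * p.1 / (2 * p.2)) : ℝ) : ℂ))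
      ((Ioi 0 ×ˢ Ioi 0) : Set (ℝ × ℝ)) := by
  apply (Complex.ofRealCLM.contDiff (n := (⊤ : ℕ∞))).comp_contDiffOn
  apply ContDiffOn.sub contDiffOn_const
  apply ContDiffOn.mul contDiffOn_const
  apply ContDiffOn.div
  · exact (contDiff_const.mul contDiff_fst).contDiffOn
  · exact (contDiff_const.mul contDiff_snd).contDiffOn
  · intro p hp
    have : (0 : ℝ) < p.2 := hp.2
    positivity

lemma contDiffOn_addConst_D1 (η₂ ε c₁ r : ℝ) {c : ℝ → ℝ → ℂ}
    (hc : ContDiffOn ℝ (⊤ : ℕ∞) (uncurry c) (Ioi 0 ×ˢ Ioi 0)) :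
    ContDiffOn ℝ (⊤ : ℕ∞) (uncurry (addConst (D1op η₂ ε c₁) r c)) (Ioi 0 ×ˢ Ioi 0) := by
  have heq : uncurry (addConst (D1op η₂ ε c₁) r c) = fun p : ℝ × ℝ =>
      (p.1 : ℂ) * deriv (fun x' => c x' p.2) p.1
      + ((c₁ - ε * (η₂ * p.1 / (2 * p.2)) : ℝ) : ℂ) * c p.1 p.2
      + (r : ℂ) * c p.1 p.2 := rfl
  rw [heq]
  refine ContDiffOn.add (ContDiffOn.add ?_ ?_) ?_
  · exact (((Complex.ofRealCLM.contDiff (n := (⊤:ℕ∞))).comp contDiff_fst).contDiffOn).mul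
      (contDiffOn_pd1 hc)
  · exact (contDiffOn_coef1 η₂ ε c₁).mul hc
  · exact contDiffOn_const.mul hc

lemma contDiffOn_coef2 (η₂ ε c₂ : ℝ) :
    ContDiffOn ℝ (⊤ : ℕ∞) (fun p : ℝ × ℝ => ((c₂ + ε * (η₂ * p.1 / (2 * p.2)) : ℝ) : ℂ))
      ((Ioi 0 ×ˢ Ioi 0) : Set (ℝ × ℝ)) := by
  apply (Complex.ofRealCLM.contDiff (n := (⊤ : ℕ∞))).comp_contDiffOn
  apply ContDiffOn.add contDiffOn_const
  apply ContDiffOn.mul contDiffOn_const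
  apply ContDiffOn.div
  · exact (contDiff_const.mul contDiff_fst).contDiffOn
  · exact (contDiff_const.mul contDiff_snd).contDiffOn
  · intro p hp
    have : (0 : ℝ) < p.2 := hp.2
    positivity

lemma contDiffOn_addConst_D2 (η₂ ε c₂ r : ℝ) {c : ℝ → ℝ → ℂ}
    (hc : ContDiffOn ℝ (⊤ : ℕ∞) (uncurry c) (Ioi 0 ×ˢ Ioi 0)) :
    ContDiffOn ℝ (⊤ : ℕ∞) (uncurry (addConst (D2op η₂ ε c₂) r c)) (Ioi 0 ×ˢ Ioi 0) := by
  have heq : uncurry (addConst (D2op η₂ ε c₂) r c) = fun p : ℝ × ℝ =>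
      (p.2 : ℂ) * deriv (fun y' => c p.1 y') p.2
      + ((c₂ + ε * (η₂ * p.1 / (2 * p.2)) : ℝ) : ℂ) * c p.1 p.2
      + (r : ℂ) * c p.1 p.2 := rfl
  rw [heq]
  refine ContDiffOn.add (ContDiffOn.add ?_ ?_) ?_
  · exact (((Complex.ofRealCLM.contDiff (n := (⊤:ℕ∞))).comp contDiff_snd).contDiffOn).mul
      (contDiffOn_pd2 hc)
  · exact (contDiffOn_coef2 η₂ ε c₂).mul hc
  · exact contDiffOn_const.mul hc


/-- **Change of variables for the first scalar equation**
(Proposition 5.16 / 5.20(6) of the paper).  If `c` is smooth on `(0,∞)²` and satisfies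
`[(D₁−d)² − (D₂+εL)² − (η₁/a₁)²] c = 0` there, then
`f(Φ(a₁,a₂)) := a₁^{c₁−d} a₂^{c₂+εL} e^{−εu} c(a₁,a₂)` is smooth on `(0,∞) × J` and
satisfies `(∂_{t₁}² − ∂_{t₂}² − t₁²) f = 0` there, where
`Φ(a₁,a₂) = (η₁/a₁, −εη₁η₂/(2a₂))` and `J = (0,∞)` if `εη₂ < 0`, `J = (−∞,0)` otherwise. -/
theorem stmt12 (η₁ η₂ ε c₁ c₂ d L : ℝ) (hη₁ : 0 < η₁) (hη₂ : η₂ ≠ 0)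
    (hε : ε = 1 ∨ ε = -1)
    (c : ℝ → ℝ → ℂ)
    (hc : ContDiffOn ℝ (⊤ : ℕ∞) (Function.uncurry c) (Set.Ioi 0 ×ˢ Set.Ioi 0))
    (heq : ∀ a₁ a₂ : ℝ, 0 < a₁ → 0 < a₂ →
      addConst (D1op η₂ ε c₁) (-d) (addConst (D1op η₂ ε c₁) (-d) c) a₁ a₂
      - addConst (D2op η₂ ε c₂) (ε * L) (addConst (D2op η₂ ε c₂) (ε * L) c) a₁ a₂
      - (((η₁ / a₁) ^ 2 : ℝ) : ℂ) * c a₁ a₂ = 0)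
    (f : ℝ → ℝ → ℂ)
    (hf : ∀ a₁ a₂ : ℝ, 0 < a₁ → 0 < a₂ →
      f (η₁ / a₁) (-ε * η₁ * η₂ / (2 * a₂)) =
        ((a₁ ^ (c₁ - d) * a₂ ^ (c₂ + ε * L) *
          Real.exp (-ε * (η₂ * a₁ / (2 * a₂))) : ℝ) : ℂ) * c a₁ a₂) :
    ContDiffOn ℝ (⊤ : ℕ∞) (Function.uncurry f)
      (Set.Ioi 0 ×ˢ (if ε * η₂ < 0 then Set.Ioi (0 : ℝ) else Set.Iio 0)) ∧
    ∀ t₁ t₂ : ℝ, 0 < t₁ →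
      t₂ ∈ (if ε * η₂ < 0 then Set.Ioi (0 : ℝ) else Set.Iio 0) →
      euler1 (euler1 f) t₁ t₂ - euler2 (euler2 f) t₁ t₂
        - ((t₁ : ℂ)) ^ 2 * f t₁ t₂ = 0 := by
  have hεne : ε ≠ 0 := by rcases hε with h | h <;> rw [h] <;> norm_num
  set J : Set ℝ := if ε * η₂ < 0 then Set.Ioi (0 : ℝ) else Set.Iio 0 with hJdef
  set k : ℝ := -ε * η₁ * η₂ / 2 with hkdef
  have hk0 : k ≠ 0 := by
    rw [hkdef]
    have h1 : ε * η₁ * η₂ ≠ 0 := mul_ne_zero (mul_ne_zero hεne hη₁.ne') hη₂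
    intro hcon
    apply h1
    have : -ε * η₁ * η₂ = 0 := by linarith [div_eq_zero_iff.mp hcon]
    linarith [this]
  have hJne : ∀ t₂ ∈ J, t₂ ≠ 0 := by
    intro t₂ ht₂
    rw [hJdef] at ht₂
    split at ht₂
    · exact (show (0:ℝ) < t₂ from ht₂).ne'
    · exact (show t₂ < (0:ℝ) from ht₂).ne
  have hJpos : ∀ t₂ ∈ J, 0 < k / t₂ := by
    intro t₂ ht₂
    rw [hJdef] at ht₂
    rw [hkdef]
    split at ht₂
    · rename_i hs
      have hkpos : 0 < -ε * η₁ * η₂ / 2 := by nlinarith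
      exact div_pos hkpos ht₂
    · rename_i hs
      have hs' : 0 < ε * η₂ := lt_of_le_of_ne (not_lt.mp hs)
        (Ne.symm (mul_ne_zero hεne hη₂))
      have hkneg : -ε * η₁ * η₂ / 2 < 0 := by nlinarith
      exact div_pos_of_neg_of_neg hkneg ht₂
  have hJopen : IsOpen J := by
    rw [hJdef]; split
    · exact isOpen_Ioi
    · exact isOpen_Iio
  -- smoothness facts
  have hc1f := contDiffOn_addConst_D1 η₂ ε c₁ (-d) hc
  have hc2f := contDiffOn_addConst_D2 η₂ ε c₂ (ε * L) hc
  have hg0 := contDiffOn_Wge (c₁ - d) (c₂ + ε * L) η₂ ε hc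
  have hG1 := contDiffOn_Wge (c₁ - d) (c₂ + ε * L) η₂ ε hc1f
  have hG2 := contDiffOn_Wge (c₁ - d) (c₂ + ε * L) η₂ ε hc2f
  -- f in terms of Wge ... c
  have hfg : ∀ t₁ t₂ : ℝ, 0 < t₁ → t₂ ∈ J →
      f t₁ t₂ = Wge (c₁ - d) (c₂ + ε * L) η₂ ε c (η₁ / t₁) (k / t₂) := by
    intro t₁ t₂ ht₁ ht₂
    have ha₁ : 0 < η₁ / t₁ := div_pos hη₁ ht₁
    have ha₂ : 0 < k / t₂ := hJpos t₂ ht₂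
    have h := hf (η₁ / t₁) (k / t₂) ha₁ ha₂
    have e1 : η₁ / (η₁ / t₁) = t₁ := by
      field_simp
    have e2 : -ε * η₁ * η₂ / (2 * (k / t₂)) = t₂ := by
      rw [hkdef]
      have ht₂0 := hJne t₂ ht₂
      field_simp
    rw [e1, e2] at h
    simpa [Wge] using h
  constructor
  · -- smoothness of f
    have hφ : ContDiffOn ℝ (⊤ : ℕ∞)
        (fun p : ℝ × ℝ => ((η₁ / p.1 : ℝ), (k / p.2 : ℝ))) (Set.Ioi 0 ×ˢ J) := by
      apply ContDiffOn.prodMk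
      · exact ContDiffOn.div contDiffOn_const contDiff_fst.contDiffOn
          (fun p hp => (show (0:ℝ) < p.1 from hp.1).ne')
      · exact ContDiffOn.div contDiffOn_const contDiff_snd.contDiffOn
          (fun p hp => hJne p.2 hp.2)
    have hmaps : Set.MapsTo (fun p : ℝ × ℝ => ((η₁ / p.1 : ℝ), (k / p.2 : ℝ)))
        (Set.Ioi 0 ×ˢ J) ((Set.Ioi 0 ×ˢ Set.Ioi 0) : Set (ℝ × ℝ)) := by
      intro p hp
      exact Set.mk_mem_prod (div_pos hη₁ hp.1) (hJpos p.2 hp.2)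
    have hcomp := ContDiffOn.comp hg0 hφ hmaps
    apply hcomp.congr
    rintro ⟨t₁, t₂⟩ hp
    exact hfg t₁ t₂ hp.1 hp.2
  · -- the PDE
    intro t₁ t₂ ht₁ ht₂
    have ha₁ : 0 < η₁ / t₁ := div_pos hη₁ ht₁
    have ha₂ : 0 < k / t₂ := hJpos t₂ ht₂
    have ht₂0 := hJne t₂ ht₂
    -- first variable, first application
    have hA1 : ∀ t : ℝ, 0 < t →
        euler1 f t t₂ = -(Wge (c₁ - d) (c₂ + ε * L) η₂ ε
          (addConst (D1op η₂ ε c₁) (-d) c) (η₁ / t) (k / t₂)) := by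
      intro t ht
      have hb : 0 < η₁ / t := div_pos hη₁ ht
      have hev : (fun s => f s t₂) =ᶠ[nhds t]
          (fun s => Wge (c₁ - d) (c₂ + ε * L) η₂ ε c (η₁ / s) (k / t₂)) :=
        Filter.eventuallyEq_of_mem (isOpen_Ioi.mem_nhds ht)
          (fun s hs => hfg s t₂ hs ht₂)
      have hder := hasDerivAt_slice1
        (diffAt_of_smooth hg0 hb ha₂)
      have hie := inv_euler (κ := η₁) ht.ne' hder
      show (t : ℂ) * deriv (fun s => f s t₂) t = _
      rw [hev.deriv_eq, hie]
      have he1 : euler1 (Wge (c₁ - d) (c₂ + ε * L) η₂ ε c) (η₁ / t) (k / t₂)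
          = _ := key1 η₂ ε c₁ d (c₂ + ε * L) hb ha₂
            (hasDerivAt_slice1 (diffAt_of_smooth hc hb ha₂))
      have he2 : ((η₁ / t : ℝ) : ℂ) * fderiv ℝ
          (Function.uncurry (Wge (c₁ - d) (c₂ + ε * L) η₂ ε c)) (η₁ / t, k / t₂) (1, 0)
          = euler1 (Wge (c₁ - d) (c₂ + ε * L) η₂ ε c) (η₁ / t) (k / t₂) := by
        rw [euler1, hder.deriv]
      rw [he2, he1]
      rfl
    -- second variable, first application
    have hA2 : ∀ t : ℝ, t ∈ J →
        euler2 f t₁ t = -(Wge (c₁ - d) (c₂ + ε * L) η₂ ε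
          (addConst (D2op η₂ ε c₂) (ε * L) c) (η₁ / t₁) (k / t)) := by
      intro t ht
      have hb : 0 < k / t := hJpos t ht
      have hev : (fun s => f t₁ s) =ᶠ[nhds t]
          (fun s => Wge (c₁ - d) (c₂ + ε * L) η₂ ε c (η₁ / t₁) (k / s)) :=
        Filter.eventuallyEq_of_mem (hJopen.mem_nhds ht)
          (fun s hs => hfg t₁ s ht₁ hs)
      have hder := hasDerivAt_slice2
        (diffAt_of_smooth hg0 ha₁ hb)
      have hie := inv_euler (κ := k) (hJne t ht) hder
      show (t : ℂ) * deriv (fun s => f t₁ s) t = _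
      rw [hev.deriv_eq, hie]
      have he1 : euler2 (Wge (c₁ - d) (c₂ + ε * L) η₂ ε c) (η₁ / t₁) (k / t)
          = _ := key2 η₂ ε c₂ L (c₁ - d) ha₁ hb
            (hasDerivAt_slice2 (diffAt_of_smooth hc ha₁ hb))
      have he2 : ((k / t : ℝ) : ℂ) * fderiv ℝ
          (Function.uncurry (Wge (c₁ - d) (c₂ + ε * L) η₂ ε c)) (η₁ / t₁, k / t) (0, 1)
          = euler2 (Wge (c₁ - d) (c₂ + ε * L) η₂ ε c) (η₁ / t₁) (k / t) := by
        rw [euler2, hder.deriv]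
      rw [he2, he1]
      rfl
    -- first variable, second application
    have hA11 : euler1 (euler1 f) t₁ t₂
        = ((( η₁ / t₁) ^ (c₁ - d) * (k / t₂) ^ (c₂ + ε * L)
            * Real.exp (-ε * (η₂ * (η₁ / t₁) / (2 * (k / t₂)))) : ℝ) : ℂ)
          * addConst (D1op η₂ ε c₁) (-d) (addConst (D1op η₂ ε c₁) (-d) c)
              (η₁ / t₁) (k / t₂) := by
      have hev : (fun t => euler1 f t t₂) =ᶠ[nhds t₁]
          (fun t => -(Wge (c₁ - d) (c₂ + ε * L) η₂ ε
            (addConst (D1op η₂ ε c₁) (-d) c) (η₁ / t) (k / t₂))) :=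
        Filter.eventuallyEq_of_mem (isOpen_Ioi.mem_nhds ht₁)
          (fun s hs => hA1 s hs)
      show (t₁ : ℂ) * deriv (fun t => euler1 f t t₂) t₁ = _
      rw [hev.deriv_eq]
      rw [deriv.fun_neg]
      have hder := hasDerivAt_slice1 (diffAt_of_smooth hG1 ha₁ ha₂)
      have hie := inv_euler (κ := η₁) ht₁.ne' hder
      rw [mul_neg, hie]
      have he1 : euler1 (Wge (c₁ - d) (c₂ + ε * L) η₂ ε
            (addConst (D1op η₂ ε c₁) (-d) c)) (η₁ / t₁) (k / t₂)
          = _ := key1 η₂ ε c₁ d (c₂ + ε * L) ha₁ ha₂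
            (hasDerivAt_slice1 (diffAt_of_smooth hc1f ha₁ ha₂))
      have he2 : ((η₁ / t₁ : ℝ) : ℂ) * fderiv ℝ
          (Function.uncurry (Wge (c₁ - d) (c₂ + ε * L) η₂ ε
            (addConst (D1op η₂ ε c₁) (-d) c))) (η₁ / t₁, k / t₂) (1, 0)
          = euler1 (Wge (c₁ - d) (c₂ + ε * L) η₂ ε
              (addConst (D1op η₂ ε c₁) (-d) c)) (η₁ / t₁) (k / t₂) := by
        rw [euler1, hder.deriv]
      rw [neg_neg, he2, he1]
    -- second variable, second application
    have hA22 : euler2 (euler2 f) t₁ t₂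
        = ((( η₁ / t₁) ^ (c₁ - d) * (k / t₂) ^ (c₂ + ε * L)
            * Real.exp (-ε * (η₂ * (η₁ / t₁) / (2 * (k / t₂)))) : ℝ) : ℂ)
          * addConst (D2op η₂ ε c₂) (ε * L) (addConst (D2op η₂ ε c₂) (ε * L) c)
              (η₁ / t₁) (k / t₂) := by
      have hev : (fun t => euler2 f t₁ t) =ᶠ[nhds t₂]
          (fun t => -(Wge (c₁ - d) (c₂ + ε * L) η₂ ε
            (addConst (D2op η₂ ε c₂) (ε * L) c) (η₁ / t₁) (k / t))) :=
        Filter.eventuallyEq_of_mem (hJopen.mem_nhds ht₂)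
          (fun s hs => hA2 s hs)
      show (t₂ : ℂ) * deriv (fun t => euler2 f t₁ t) t₂ = _
      rw [hev.deriv_eq]
      rw [deriv.fun_neg]
      have hder := hasDerivAt_slice2 (diffAt_of_smooth hG2 ha₁ ha₂)
      have hie := inv_euler (κ := k) ht₂0 hder
      rw [mul_neg, hie]
      have he1 : euler2 (Wge (c₁ - d) (c₂ + ε * L) η₂ ε
            (addConst (D2op η₂ ε c₂) (ε * L) c)) (η₁ / t₁) (k / t₂)
          = _ := key2 η₂ ε c₂ L (c₁ - d) ha₁ ha₂
            (hasDerivAt_slice2 (diffAt_of_smooth hc2f ha₁ ha₂))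
      have he2 : ((k / t₂ : ℝ) : ℂ) * fderiv ℝ
          (Function.uncurry (Wge (c₁ - d) (c₂ + ε * L) η₂ ε
            (addConst (D2op η₂ ε c₂) (ε * L) c))) (η₁ / t₁, k / t₂) (0, 1)
          = euler2 (Wge (c₁ - d) (c₂ + ε * L) η₂ ε
              (addConst (D2op η₂ ε c₂) (ε * L) c)) (η₁ / t₁) (k / t₂) := by
        rw [euler2, hder.deriv]
      rw [neg_neg, he2, he1]
    -- put everything together
    have h0 := heq (η₁ / t₁) (k / t₂) ha₁ ha₂
    have hft : f t₁ t₂ = Wge (c₁ - d) (c₂ + ε * L) η₂ ε c (η₁ / t₁) (k / t₂) :=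
      hfg t₁ t₂ ht₁ ht₂
    have hcast : ((t₁ : ℂ)) ^ 2 = (((η₁ / (η₁ / t₁)) ^ 2 : ℝ) : ℂ) := by
      have e1 : η₁ / (η₁ / t₁) = t₁ := by field_simp
      rw [e1]
      push_cast
      ring
    rw [hA11, hA22, hft, hcast]
    simp only [Wge]
    linear_combination (((η₁ / t₁) ^ (c₁ - d) * (k / t₂) ^ (c₂ + ε * L)
      * Real.exp (-ε * (η₂ * (η₁ / t₁) / (2 * (k / t₂)))) : ℝ) : ℂ) * h0
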